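/- Let p be a prime and let f be a nonzero polynomial in two variables with integer coefficients such that f(x,y) ≠ 0 for all x, y in the field ℚ_p of p-adic numbers. Then there exists a bound B such that for all integers m and n, f(m,n) ≠ 0 and the p-adic valuation of f(m,n) is at most B. -/

import Mathlib

open MvPolynomial

/-- The closed-form criterion: if a nonzero bivariate integer polynomial `f` has no
zero in `ℚ_p × ℚ_p`, then `f` does not vanish at integer points and the `p`-adic
valuations of its values on `ℤ × ℤ` are bounded. -/
theorem valuation_bounded_of_no_padic_zero (p : ℕ) [Fact p.Prime]
    (f : MvPolynomial (Fin 2) ℤ) (hf : f ≠ 0)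
    (hnozero : ∀ x y : ℚ_[p], MvPolynomial.aeval ![x, y] f ≠ 0) :
    ∃ B : ℕ, ∀ m n : ℤ,
      MvPolynomial.eval ![m, n] f ≠ 0 ∧
      padicValInt p (MvPolynomial.eval ![m, n] f) ≤ B := by
  have hp1 : (1:ℝ) < p := by exact_mod_cast (Fact.out : p.Prime).one_lt
  set F : MvPolynomial (Fin 2) ℚ_[p] := MvPolynomial.map (Int.castRingHom ℚ_[p]) f with hF
  have hFe : ∀ x y : ℚ_[p], eval ![x, y] F = aeval ![x, y] f := by
    intro x y
    rw [aeval_def, eval₂_eq_eval_map]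
    rfl
  have hcoe : Continuous ((↑) : ℤ_[p] → ℚ_[p]) := continuous_subtype_val
  have hcont : Continuous fun z : ℤ_[p] × ℤ_[p] =>
      ‖eval ![(z.1 : ℚ_[p]), (z.2 : ℚ_[p])] F‖ := by
    apply Continuous.norm
    apply (MvPolynomial.continuous_eval (p := F)).comp
    apply continuous_pi
    intro i
    fin_cases i
    · simpa using (show Continuous fun z : ℤ_[p] × ℤ_[p] => (z.1 : ℚ_[p]) from hcoe.comp continuous_fst)
    · simpa using (show Continuous fun z : ℤ_[p] × ℤ_[p] => (z.2 : ℚ_[p]) from hcoe.comp continuous_snd)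
  obtain ⟨z0, -, hmin⟩ := isCompact_univ.exists_isMinOn ⟨(0,0), trivial⟩ hcont.continuousOn
  set ε := ‖eval ![(z0.1 : ℚ_[p]), (z0.2 : ℚ_[p])] F‖ with hεdef
  have hε : 0 < ε := by
    rw [hεdef, norm_pos_iff, hFe]
    exact hnozero _ _
  obtain ⟨B, hB⟩ := exists_pow_lt_of_lt_one hε (show (p:ℝ)⁻¹ < 1 from inv_lt_one_of_one_lt₀ hp1)
  refine ⟨B, fun m n => ?_⟩
  have hkey : ((eval ![m, n] f : ℤ) : ℚ_[p]) = eval ![(m:ℚ_[p]), (n:ℚ_[p])] F := by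
    have := eval₂_comp_left (Int.castRingHom ℚ_[p]) (RingHom.id ℤ) ![m, n] f
    rw [eval₂_id] at this
    rw [show (eval ![m, n] f : ℚ_[p]) = (Int.castRingHom ℚ_[p]) (eval ![m, n] f) from rfl, this,
      eval₂_eq_eval_map, RingHom.comp_id,
      show (⇑(Int.castRingHom ℚ_[p]) ∘ ![m, n]) = ![(m:ℚ_[p]), (n:ℚ_[p])] by
        funext i; fin_cases i <;> simp]
  have hge : ε ≤ ‖((eval ![m, n] f : ℤ) : ℚ_[p])‖ := by
    rw [hkey]
    have := hmin (Set.mem_univ ((m : ℤ_[p]), (n : ℤ_[p])))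
    simpa using this
  have hne : eval ![m, n] f ≠ 0 := by
    intro h
    rw [h] at hge
    simp at hge
    exact absurd hge (not_le.2 hε)
  refine ⟨hne, ?_⟩
  by_contra hlt
  push_neg at hlt
  have hdvd : ((p : ℤ) ^ (B + 1)) ∣ eval ![m, n] f := by
    have h1 : p ^ (B + 1) ∣ (eval ![m, n] f).natAbs :=
      dvd_trans (pow_dvd_pow p (Nat.succ_le_of_lt hlt)) pow_padicValNat_dvd
    exact Int.dvd_natAbs.1 (by exact_mod_cast h1)
  have hle : ‖((eval ![m, n] f : ℤ) : ℚ_[p])‖ ≤ (p:ℝ) ^ (-(B+1) : ℤ) :=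
    (Padic.norm_int_le_pow_iff_dvd _ _).2 hdvd
  have : (p:ℝ) ^ (-(B+1) : ℤ) < ε := by
    calc (p:ℝ) ^ (-(B+1) : ℤ) = ((p:ℝ)⁻¹) ^ (B+1) := by
          rw [zpow_neg, inv_pow]; norm_cast
      _ ≤ ((p:ℝ)⁻¹) ^ B := pow_le_pow_of_le_one (by positivity) (inv_le_one_of_one_le₀ hp1.le) (Nat.le_succ B)
      _ < ε := hB
  linarith [hge]
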